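/- arXiv:2511.06379 — 2 statements merged into one kernel-verified Lean document; each statement's English description precedes it below -/
import Mathlib

section
/- Let M be the symmetric block matrix M = [[M₁₁, M₁₂], [M₁₂ᵀ, Λ + R]] of real matrices, where M₁₁ ∈ ℝ^{p×p} is symmetric positive definite, R ∈ ℝ^{m×m} is symmetric, and Λ = diag(λ₁,…,λ_m) is diagonal. Let K := M₁₂ᵀ M₁₁⁻¹ M₁₂. If every diagonal entry satisfies λ_k > -λ_min(R - K), where λ_min(R - K) is the smallest eigenvalue of the symmetric matrix R - K, then M is positive definite. -/
open Matrix

lemma shift_posSemidef {m : ℕ} {A : Matrix (Fin m) (Fin m) ℝ}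
    (hA : A.IsHermitian) {μ : ℝ} (h : ∀ i, μ ≤ hA.eigenvalues i) :
    (A - μ • 1).PosSemidef := by
  set U : Matrix (Fin m) (Fin m) ℝ := (hA.eigenvectorUnitary : Matrix (Fin m) (Fin m) ℝ) with hUdef
  have hUU : U * star U = 1 := (Matrix.mem_unitaryGroup_iff).mp hA.eigenvectorUnitary.2
  have key : A - μ • 1 = U * (diagonal (fun i => hA.eigenvalues i - μ)) * Uᴴ := by
    have hdiag : diagonal (fun i => hA.eigenvalues i - μ) =
        diagonal (RCLike.ofReal ∘ hA.eigenvalues) - μ • (1 : Matrix (Fin m) (Fin m) ℝ) := by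
      rw [Matrix.smul_one_eq_diagonal, ← Matrix.diagonal_sub]
      rfl
    have hspec := hA.spectral_theorem
    rw [Unitary.conjStarAlgAut_apply] at hspec
    rw [hdiag, Matrix.mul_sub, Matrix.sub_mul, ← Matrix.star_eq_conjTranspose,
      ← hspec]
    congr 1
    rw [Matrix.mul_smul, Matrix.mul_one, Matrix.smul_mul, hUU]
  rw [key]
  exact (Matrix.posSemidef_diagonal_iff.mpr
    (fun i => sub_nonneg.mpr (h i))).mul_mul_conjTranspose_same U

/-- Lemma A.1 (1): for the symmetric block matrix
`M = [[M₁₁, M₁₂], [M₁₂ᵀ, Λ + R]]` with `M₁₁ ≻ 0`, `R` symmetric and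
`Λ = diag(λ₁,…,λ_m)`, if every `λ_k > -λ_min(R - K)` with
`K = M₁₂ᵀ M₁₁⁻¹ M₁₂`, then `M` is positive definite. -/
theorem block_matrix_posDef_of_rates {p m : ℕ}
    (M11 : Matrix (Fin p) (Fin p) ℝ) (hM11 : M11.PosDef)
    (M12 : Matrix (Fin p) (Fin m) ℝ)
    (R : Matrix (Fin m) (Fin m) ℝ) (hR : R.IsHermitian)
    (lam : Fin m → ℝ)
    (K : Matrix (Fin m) (Fin m) ℝ) (hK : K = M12ᵀ * M11⁻¹ * M12)
    (hRK : (R - K).IsHermitian)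
    (hlam : ∀ k, lam k > -(⨅ i, hRK.eigenvalues i)) :
    (Matrix.fromBlocks M11 M12 M12ᵀ (Matrix.diagonal lam + R)).PosDef := by
  haveI := hM11.isUnit.invertible
  set μ : ℝ := ⨅ i, hRK.eigenvalues i with hμ
  have hT : M12ᴴ = M12ᵀ := Matrix.conjTranspose_eq_transpose_of_trivial M12
  -- Schur complement is positive definite
  have hS : (Matrix.diagonal lam + R - M12ᴴ * M11⁻¹ * M12).PosDef := by
    have hsplit : Matrix.diagonal lam + R - M12ᴴ * M11⁻¹ * M12 =
        Matrix.diagonal (fun i => lam i + μ) + ((R - K) - μ • 1) := by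
      rw [hT, ← hK]
      have h1 : Matrix.diagonal (fun i => lam i + μ) =
          Matrix.diagonal lam + μ • (1 : Matrix (Fin m) (Fin m) ℝ) := by
        rw [Matrix.smul_one_eq_diagonal, ← Matrix.diagonal_add]
      rw [h1]; abel
    rw [hsplit]
    refine Matrix.PosDef.add_posSemidef (Matrix.posDef_diagonal_iff.mpr fun i => ?_)
      (shift_posSemidef hRK fun i => ciInf_le (Finite.bddBelow_range _) i)
    have := hlam i
    linarith
  -- assemble
  rw [Matrix.posDef_iff_dotProduct_mulVec]
  constructor
  · rw [← hT, (Matrix.IsHermitian.fromBlocks₁₁ _ _ hM11.isHermitian)]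
    exact hS.isHermitian
  · intro x hx
    have hx' : x = (x ∘ Sum.inl) ⊕ᵥ (x ∘ Sum.inr) := (Sum.elim_comp_inl_inr x).symm
    have hschur := Matrix.schur_complement_eq₁₁ (A := M11) M12 (Matrix.diagonal lam + R)
      (x ∘ Sum.inl) (x ∘ Sum.inr) hM11.isHermitian
    rw [Matrix.dotProduct_mulVec, hx', ← hT, hschur, ← Matrix.dotProduct_mulVec,
      ← Matrix.dotProduct_mulVec]
    by_cases hy : (x ∘ Sum.inr) = 0
    · have hxl : (x ∘ Sum.inl) ≠ 0 := by
        intro h0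
        apply hx
        rw [hx', hy, h0]
        ext (i | i) <;> rfl
      have h2 : x ∘ Sum.inl + (M11⁻¹ * M12) *ᵥ (x ∘ Sum.inr) = x ∘ Sum.inl := by
        rw [hy, Matrix.mulVec_zero, add_zero]
      rw [h2, hy]
      simp only [Matrix.mulVec_zero, dotProduct_zero, add_zero]
      exact hM11.dotProduct_mulVec_pos hxl
    · have t1 : 0 ≤ star (x ∘ Sum.inl + (M11⁻¹ * M12) *ᵥ (x ∘ Sum.inr)) ⬝ᵥ
          M11 *ᵥ (x ∘ Sum.inl + (M11⁻¹ * M12) *ᵥ (x ∘ Sum.inr)) := hM11.posSemidef.dotProduct_mulVec_nonneg _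
      have t2 : 0 < star (x ∘ Sum.inr) ⬝ᵥ
          (Matrix.diagonal lam + R - M12ᴴ * M11⁻¹ * M12) *ᵥ (x ∘ Sum.inr) := hS.dotProduct_mulVec_pos hy
      linarith
end

section
/- Let M be the symmetric block matrix M = [[M₁₁, M₁₂], [M₁₂ᵀ, Λ + R]] of real matrices, where M₁₁ ∈ ℝ^{p×p} is symmetric positive definite, R ∈ ℝ^{m×m} is symmetric, and Λ = diag(λ₁,…,λ_m) is diagonal. Fix μ with 0 < μ < λ_min(M₁₁) and set K̃_μ := M₁₂ᵀ (M₁₁ - μI)⁻¹ M₁₂. If every diagonal entry satisfies λ_k ≥ μ - λ_min(R - K̃_μ), then M - μI is positive semidefinite, i.e. M ⪰ μI in the Loewner order. -/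
open Matrix

lemma aux_sub_smul_posSemidef {n : Type*} [Fintype n] [DecidableEq n]
    {A : Matrix n n ℝ} (hA : A.IsHermitian) {c : ℝ}
    (h : ∀ i, c ≤ hA.eigenvalues i) :
    (A - c • (1 : Matrix n n ℝ)).PosSemidef := by
  have hspec := hA.spectral_theorem
  set U := (hA.eigenvectorUnitary : Matrix n n ℝ) with hUdef
  have hU : U * star U = 1 := mem_unitaryGroup_iff.mp hA.eigenvectorUnitary.2
  have key : A - c • (1 : Matrix n n ℝ)
      = U * diagonal (fun i => hA.eigenvalues i - c) * star U := by
    have hd : diagonal (fun i => hA.eigenvalues i - c)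
        = diagonal (RCLike.ofReal ∘ hA.eigenvalues) - c • (1 : Matrix n n ℝ) := by
      ext i j
      by_cases hij : i = j <;>
        simp [diagonal, hij, Matrix.one_apply, Function.comp]
    rw [hd, Matrix.mul_sub, Matrix.sub_mul]; conv_lhs => rw [hspec, Unitary.conjStarAlgAut_apply]
    congr 1
    rw [Matrix.mul_smul, Matrix.mul_one, Matrix.smul_mul, hU]
  rw [key]
  have hdiag : (diagonal (fun i => hA.eigenvalues i - c)).PosSemidef :=
    posSemidef_diagonal_iff.mpr (fun i => sub_nonneg.mpr (h i))
  have := hdiag.mul_mul_conjTranspose_same U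
  simpa [Matrix.star_eq_conjTranspose] using this

/-- Lemma A.1 (2): for the symmetric block matrix
`M = [[M₁₁, M₁₂], [M₁₂ᵀ, Λ + R]]` with `M₁₁ ≻ 0`, `R` symmetric and
`Λ = diag(λ₁,…,λ_m)`, if `0 < μ < λ_min(M₁₁)` and every
`λ_k ≥ μ - λ_min(R - K̃_μ)` with `K̃_μ = M₁₂ᵀ (M₁₁ - μI)⁻¹ M₁₂`,
then `M ⪰ μI`. -/
theorem block_matrix_loewner_bound_of_rates {p m : ℕ}
    (M11 : Matrix (Fin p) (Fin p) ℝ) (hM11 : M11.PosDef)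
    (M12 : Matrix (Fin p) (Fin m) ℝ)
    (R : Matrix (Fin m) (Fin m) ℝ) (hR : R.IsHermitian)
    (lam : Fin m → ℝ)
    (μ : ℝ) (hμ0 : 0 < μ) (hμ1 : μ < ⨅ i, hM11.1.eigenvalues i)
    (Ktilde : Matrix (Fin m) (Fin m) ℝ)
    (hKtilde : Ktilde = M12ᵀ * (M11 - μ • (1 : Matrix (Fin p) (Fin p) ℝ))⁻¹ * M12)
    (hRK : (R - Ktilde).IsHermitian)
    (hlam : ∀ k, lam k ≥ μ - ⨅ i, hRK.eigenvalues i) :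
    (Matrix.fromBlocks M11 M12 M12ᵀ (Matrix.diagonal lam + R)
      - μ • (1 : Matrix (Fin p ⊕ Fin m) (Fin p ⊕ Fin m) ℝ)).PosSemidef := by
  -- A := M11 - μ•1 is positive definite
  have hApos : (M11 - μ • (1 : Matrix (Fin p) (Fin p) ℝ)).PosDef := by
    have hPSD : (M11 - (⨅ i, hM11.1.eigenvalues i) • (1 : Matrix (Fin p) (Fin p) ℝ)).PosSemidef :=
      aux_sub_smul_posSemidef hM11.1 (fun i => ciInf_le (Finite.bddBelow_range _) i)
    have heq : M11 - μ • (1 : Matrix (Fin p) (Fin p) ℝ)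
        = ((⨅ i, hM11.1.eigenvalues i) - μ) • (1 : Matrix (Fin p) (Fin p) ℝ)
          + (M11 - (⨅ i, hM11.1.eigenvalues i) • (1 : Matrix (Fin p) (Fin p) ℝ)) := by
      rw [sub_smul]; abel
    rw [heq]
    refine Matrix.PosDef.add_posSemidef ?_ hPSD
    have : PosDef ((((⨅ i, hM11.1.eigenvalues i) - μ)) • (1 : Matrix (Fin p) (Fin p) ℝ)) := by
      have h1 : (((⨅ i, hM11.1.eigenvalues i) - μ)) • (1 : Matrix (Fin p) (Fin p) ℝ)
          = diagonal (fun _ => (⨅ i, hM11.1.eigenvalues i) - μ) := by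
        ext i j; by_cases hij : i = j <;> simp [diagonal, hij, Matrix.one_apply]
      rw [h1]
      exact posDef_diagonal_iff.mpr (fun _ => sub_pos.mpr hμ1)
    exact this
  haveI : Invertible (M11 - μ • (1 : Matrix (Fin p) (Fin p) ℝ)) :=
    invertibleOfIsUnitDet _ (isUnit_iff_ne_zero.mpr hApos.det_pos.ne')
  -- rewrite the big matrix as a block matrix
  have hblock : Matrix.fromBlocks M11 M12 M12ᵀ (Matrix.diagonal lam + R)
      - μ • (1 : Matrix (Fin p ⊕ Fin m) (Fin p ⊕ Fin m) ℝ)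
      = Matrix.fromBlocks (M11 - μ • 1) M12 M12ᵀ
          (Matrix.diagonal lam + R - μ • 1) := by
    rw [← fromBlocks_one, Matrix.fromBlocks_smul]
    ext (i|i) (j|j) <;> simp [Matrix.fromBlocks, Matrix.sub_apply]
  rw [hblock]
  have hconj : M12ᵀ = M12ᴴ := by
    ext i j; simp [conjTranspose_apply]
  rw [hconj]
  rw [Matrix.PosDef.fromBlocks₁₁ _ _ hApos]
  -- Schur complement
  set c := ⨅ i, hRK.eigenvalues i with hc
  have hsp : Matrix.diagonal lam + R - μ • 1 - M12ᴴ * (M11 - μ • 1)⁻¹ * M12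
      = (Matrix.diagonal lam - (μ - c) • (1 : Matrix (Fin m) (Fin m) ℝ))
        + ((R - Ktilde) - c • (1 : Matrix (Fin m) (Fin m) ℝ)) := by
    rw [hKtilde, ← hconj, sub_smul]
    abel
  rw [hsp]
  refine Matrix.PosSemidef.add ?_ ?_
  · have h1 : Matrix.diagonal lam - (μ - c) • (1 : Matrix (Fin m) (Fin m) ℝ)
        = diagonal (fun k => lam k - (μ - c)) := by
      ext i j; by_cases hij : i = j <;> simp [diagonal, hij, Matrix.one_apply]
    rw [h1]
    exact posSemidef_diagonal_iff.mpr (fun k => sub_nonneg.mpr (by linarith [hlam k]))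
  · exact aux_sub_smul_posSemidef hRK (fun i => ciInf_le (Finite.bddBelow_range _) i)
end
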